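/- Let q = 2^m with m ≥ 2 and let E_t be the elliptic curve over F_q with affine equation Y² + XY = X³ + tX for t ∈ F_q^*. Then -Kl_q(t) = q + 1 - #E_t(F_q), where Kl_q(t) = Σ_{x ∈ F_q^*} (-1)^{Tr_{F_q/F_2}(x + t/x)}. -/

import Mathlib

section aux
variable {K : Type*} [Field K] [Fintype K] [DecidableEq K] [Algebra (ZMod 2) K]

omit [DecidableEq K] in
theorem aux_trace_sq [CharP K 2] (z : K) :
    Algebra.trace (ZMod 2) K (z ^ 2) = Algebra.trace (ZMod 2) K z := by
  have hinj : Function.Injective (frobenius K 2) := (frobenius K 2).injective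
  let e : K ≃+* K := RingEquiv.ofBijective (frobenius K 2) (Finite.injective_iff_bijective.mp hinj)
  have hcomm : ∀ r : ZMod 2, e (algebraMap (ZMod 2) K r) = algebraMap (ZMod 2) K r := by
    intro r
    show frobenius K 2 (algebraMap (ZMod 2) K r) = algebraMap (ZMod 2) K r
    have hr : r ^ 2 = r := by revert r; decide
    rw [frobenius_def, ← map_pow, hr]
  let e' : K ≃ₐ[ZMod 2] K := AlgEquiv.ofRingEquiv hcomm
  have := Algebra.trace_eq_of_algEquiv e' z
  have he : e' z = z ^ 2 := by simp [e', e, AlgEquiv.ofRingEquiv, frobenius_def]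
  rwa [he] at this

omit [DecidableEq K] in
theorem aux_artin_schreier [CharP K 2] (c : K) :
    (∃ z : K, z ^ 2 + z = c) ↔ Algebra.trace (ZMod 2) K c = 0 := by
  have hfact : Fact (Nat.Prime 2) := ⟨Nat.prime_two⟩
  let f : K →+ K := AddMonoidHom.mk' (fun z => z ^ 2 + z) (by
    intro a b
    have h := CharTwo.add_sq a b
    simp only [h]; ring)
  let T : K →+ ZMod 2 := (Algebra.trace (ZMod 2) K).toAddMonoidHom
  have hle : f.range ≤ T.ker := by
    rintro _ ⟨z, rfl⟩
    show Algebra.trace (ZMod 2) K (z ^ 2 + z) = 0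
    rw [map_add, aux_trace_sq, CharTwo.add_self_eq_zero]
  have hkerf : (f.ker : Set K) = {0, 1} := by
    ext z
    simp only [AddMonoidHom.mem_ker, SetLike.mem_coe, Set.mem_insert_iff, Set.mem_singleton_iff]
    show z ^ 2 + z = 0 ↔ _
    constructor
    · intro h
      have hz : z * (z + 1) = 0 := by linear_combination h
      rcases mul_eq_zero.mp hz with h' | h'
      · left; exact h'
      · right; linear_combination h' - CharTwo.add_self_eq_zero (1 : K)
    · rintro (rfl | rfl) <;> simp [CharTwo.add_self_eq_zero]
  have hcardkerf : Nat.card f.ker = 2 := by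
    rw [show Nat.card f.ker = (f.ker : Set K).ncard from Nat.card_coe_set_eq _, hkerf,
      Set.ncard_pair zero_ne_one]
  have h1 : Nat.card f.range * 2 = Nat.card K := by
    have h := AddSubgroup.card_mul_index f.ker
    rw [AddSubgroup.index_ker, hcardkerf] at h
    linarith [h]
  have h2 : Nat.card T.ker * 2 = Nat.card K := by
    have h := AddSubgroup.card_mul_index T.ker
    rw [AddSubgroup.index_ker] at h
    have hsurj : Function.Surjective T := Algebra.trace_surjective (ZMod 2) K
    have hr : Nat.card T.range = 2 := by
      rw [(AddMonoidHom.range_eq_top (f := T)).mpr hsurj, AddSubgroup.card_top]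
      simp [Nat.card_eq_fintype_card]
    rw [hr] at h
    linarith [h]
  have heq : f.range = T.ker :=
    AddSubgroup.eq_of_le_of_card_ge hle (by omega)
  constructor
  · rintro ⟨z, rfl⟩
    have : z ^ 2 + z ∈ T.ker := heq ▸ ⟨z, rfl⟩
    exact this
  · intro h
    have : c ∈ f.range := heq ▸ (show c ∈ T.ker from h)
    obtain ⟨z, hz⟩ := this
    exact ⟨z, hz⟩

theorem aux_fiber_count [CharP K 2] (c : K) :
    (Finset.univ.filter fun z : K => z ^ 2 + z = c).card =
      if Algebra.trace (ZMod 2) K c = 0 then 2 else 0 := by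
  by_cases h : Algebra.trace (ZMod 2) K c = 0
  · rw [if_pos h]
    obtain ⟨z₀, hz₀⟩ := (aux_artin_schreier c).mpr h
    have hset : (Finset.univ.filter fun z : K => z ^ 2 + z = c) = {z₀, z₀ + 1} := by
      ext z
      simp only [Finset.mem_filter, Finset.mem_univ, true_and, Finset.mem_insert,
        Finset.mem_singleton]
      constructor
      · intro hz
        have h2 : (2 : K) = 0 := CharTwo.two_eq_zero
        have hfac : (z + z₀) * (z + z₀ + 1) = 0 := by
          linear_combination hz - hz₀ + (z * z₀ + z₀ ^ 2 + z₀) * h2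
        rcases mul_eq_zero.mp hfac with h' | h'
        · left; linear_combination h' - CharTwo.add_self_eq_zero z₀
        · right; linear_combination h' - (z₀ + 1) * h2
      · rintro (rfl | rfl)
        · exact hz₀
        · have h2 : (2 : K) = 0 := CharTwo.two_eq_zero
          linear_combination hz₀ + (z₀ + 1) * h2
    rw [hset, Finset.card_insert_of_notMem (by simp), Finset.card_singleton]
  · rw [if_neg h, Finset.card_eq_zero, Finset.filter_eq_empty_iff]
    intro z _
    exact fun hz => h ((aux_artin_schreier c).mp ⟨z, hz⟩)

end aux

def auxPtEquiv {F : Type*} [CommRing F] (W : WeierstrassCurve.Affine F) :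
    W.Point ≃ Option {p : F × F // W.Nonsingular p.1 p.2} where
  toFun P := match P with
    | .zero => none
    | @WeierstrassCurve.Affine.Point.some _ _ _ x y h => some ⟨(x, y), h⟩
  invFun o := match o with
    | none => .zero
    | some ⟨(_, _), h⟩ => .some _ _ h
  left_inv P := by cases P <;> rfl
  right_inv o := by rcases o with _ | ⟨⟨x, y⟩, h⟩ <;> rfl


/-- Let `q = 2 ^ m` with `m ≥ 2` and let `E_t` be the elliptic curve over `F_q` with affine
equation `Y² + XY = X³ + tX`, for `t ∈ F_q^*`.  Then `-Kl_q(t) = q + 1 - #E_t(F_q)`, where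
`Kl_q(t) = ∑_{x ∈ F_q^*} (-1) ^ Tr(x + t/x)` and `#E_t(F_q)` counts the affine points
together with the point at infinity. -/
theorem stmt5 (m : ℕ) (hm : 2 ≤ m) (K : Type*) [Field K] [Fintype K] [DecidableEq K]
    [Algebra (ZMod 2) K] (hcard : Fintype.card K = 2 ^ m) (t : Kˣ)
    (E : WeierstrassCurve.Affine K)
    (hE : E = { a₁ := 1, a₂ := 0, a₃ := 0, a₄ := (t : K), a₆ := 0 }) :
    -(∑ x : Kˣ, (-1 : ℤ) ^ (Algebra.trace (ZMod 2) K ((x : K) + (t : K) * (x : K)⁻¹)).val) =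
      (2 ^ m + 1 : ℤ) - Nat.card E.Point := by
  classical
  have hchar : CharP K 2 := charP_of_injective_algebraMap (algebraMap (ZMod 2) K).injective 2
  have h2 : (2 : K) = 0 := CharTwo.two_eq_zero
  -- equation characterization
  have heq : ∀ x y : K, E.Equation x y ↔ y ^ 2 + x * y = x ^ 3 + (t : K) * x := by
    intro x y
    rw [hE, WeierstrassCurve.Affine.equation_iff]
    constructor <;> intro h <;> linear_combination h
  -- every solution is nonsingular
  have hns : ∀ x y : K, E.Equation x y → E.Nonsingular x y := by
    intro x y h
    rw [hE, WeierstrassCurve.Affine.nonsingular_iff]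
    refine ⟨hE ▸ h, ?_⟩
    by_cases hx : x = 0
    · left
      subst hx
      have hy : y = 0 := by
        have := (heq 0 y).mp h
        have hy2 : y ^ 2 = 0 := by linear_combination this
        exact pow_eq_zero_iff (n := 2) (by norm_num) |>.mp hy2
      subst hy
      intro hcon
      have hcon' : (1 : K) * 0 = 3 * 0 ^ 2 + 2 * 0 * 0 + (t : K) := hcon
      apply t.ne_zero
      linear_combination -hcon'
    · right
      intro hc
      apply hx
      have hc' : y = -y - 1 * x - 0 := hc
      linear_combination hc' - y * h2
  -- point count
  have hptcard : Nat.card E.Point =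
      (Finset.univ.filter fun p : K × K => E.Equation p.1 p.2).card + 1 := by
    rw [Nat.card_congr (auxPtEquiv E), Finite.card_option]
    congr 1
    rw [Nat.card_eq_fintype_card]
    rw [Fintype.card_congr (Equiv.subtypeEquivRight (q := fun p : K × K => E.Equation p.1 p.2)
      (fun p => ⟨fun h => h.1, hns p.1 p.2⟩))]
    rw [Fintype.card_subtype]
  -- fiberwise sum
  have hsum : (Finset.univ.filter fun p : K × K => E.Equation p.1 p.2).card =
      ∑ x : K, (Finset.univ.filter fun y : K => E.Equation x y).card := by
    rw [Finset.card_filter, ← Finset.univ_product_univ, Finset.sum_product]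
    simp only [Finset.card_filter]
  -- inner counts
  have hzero : (Finset.univ.filter fun y : K => E.Equation 0 y).card = 1 := by
    have h0 : (Finset.univ.filter fun y : K => E.Equation 0 y) = {0} := by
      ext y
      simp only [Finset.mem_filter, Finset.mem_univ, true_and, Finset.mem_singleton, heq]
      constructor
      · intro h
        have hy2 : y ^ 2 = 0 := by linear_combination h
        exact pow_eq_zero_iff (n := 2) (by norm_num) |>.mp hy2
      · rintro rfl; ring
    rw [h0, Finset.card_singleton]
  have hinner : ∀ x : K, x ≠ 0 → (Finset.univ.filter fun y : K => E.Equation x y).card =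
      if Algebra.trace (ZMod 2) K (x + (t : K) * x⁻¹) = 0 then 2 else 0 := by
    intro x hx
    rw [← aux_fiber_count]
    refine Finset.card_bij' (fun y _ => y * x⁻¹) (fun z _ => z * x) ?_ ?_ ?_ ?_
    · intro y hy
      simp only [Finset.mem_filter, Finset.mem_univ, true_and] at hy ⊢
      rw [heq] at hy
      field_simp
      linear_combination hy
    · intro z hz
      simp only [Finset.mem_filter, Finset.mem_univ, true_and] at hz ⊢
      rw [heq]
      field_simp at hz
      linear_combination x * hz
    · intro y _; field_simp
    · intro z _; field_simp
  -- value of inner count in ℤ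
  have hval : ∀ c : K, ((if Algebra.trace (ZMod 2) K c = 0 then 2 else 0 : ℕ) : ℤ) =
      1 + (-1 : ℤ) ^ (Algebra.trace (ZMod 2) K c).val := by
    intro c
    generalize Algebra.trace (ZMod 2) K c = a
    revert a; decide
  have hq : (Fintype.card K : ℤ) = 2 ^ m := by exact_mod_cast hcard
  set Kl : ℤ := ∑ x : Kˣ, (-1 : ℤ) ^ (Algebra.trace (ZMod 2) K ((x : K) + (t : K) * (x : K)⁻¹)).val
    with hKl
  -- sum over nonzero elements equals sum over units
  have hrest : ∑ x ∈ Finset.univ.filter (fun x : K => x ≠ 0),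
      ((Finset.univ.filter fun y : K => E.Equation x y).card : ℤ) =
      (Fintype.card Kˣ : ℤ) + Kl := by
    have hbij : ∀ g : K → ℤ, ∑ u : Kˣ, g (u : K) =
        ∑ x ∈ Finset.univ.filter (fun x : K => x ≠ 0), g x := by
      intro g
      refine Finset.sum_bij' (fun (u : Kˣ) _ => (u : K))
        (fun x hx => Units.mk0 x (by simpa using hx)) ?_ ?_ ?_ ?_ ?_
      · intro u _; simp [u.ne_zero]
      · intro x hx; simp
      · intro u _; exact Units.ext rfl
      · intro x hx; rfl
      · intro u _; rfl
    rw [← hbij]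
    have hcu : (Fintype.card Kˣ : ℤ) = ∑ _u : Kˣ, (1 : ℤ) := by simp
    rw [hKl, hcu, ← Finset.sum_add_distrib]
    apply Finset.sum_congr rfl
    intro u _
    rw [hinner (u : K) u.ne_zero, hval]
  -- assemble
  have hcardU : (Fintype.card Kˣ : ℤ) = 2 ^ m - 1 := by
    rw [Fintype.card_units, hcard]
    have : 1 ≤ 2 ^ m := Nat.one_le_two_pow
    push_cast [this]
    ring
  have key : (Nat.card E.Point : ℤ) = 2 ^ m + 1 + Kl := by
    rw [hptcard, hsum]
    push_cast
    rw [← Finset.sum_filter_add_sum_filter_not Finset.univ (fun x : K => x ≠ 0)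
      (fun x : K => ((Finset.univ.filter fun y : K => E.Equation x y).card : ℤ))]
    have hfn : Finset.univ.filter (fun x : K => ¬x ≠ 0) = {0} := by
      ext x; simp
    rw [hfn, Finset.sum_singleton, hzero, hrest, hcardU]
    push_cast
    ring
  rw [key]
  ring
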